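/- Let F(t,u) = ½ a(u,u) − ⟨f(t),u⟩ with a coercive continuous symmetric bilinear form, and let u ∈ W^{1,2}_{loc}(0,T; H¹₀) with u̇(t) ≥ 0 a.e. Then for a.e. t the following are equivalent: (i) A u(t) + f(t) ∈ ∂Φ(u̇(t)), where Φ(v) = ½‖v‖²_{L²} + I_{{v≥0}} and ∂Φ ⊂ H⁻¹ is the subdifferential; (ii) ½|u̇(t)|²_{L²₊} + ½|∂F|²_{L²₊}(t, u(t)) = −dF(t,u(t))[u̇(t)]. -/

import Mathlib

open MeasureTheory

set_option maxHeartbeats 1000000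

theorem my_aux {α : Type*} [MeasurableSpace α] {μ : Measure α}
    {V : Type*} [NormedAddCommGroup V] [NormedSpace ℝ V]
    (ι : V →L[ℝ] Lp ℝ 2 μ) (L : V →ₗ[ℝ] ℝ) (v : V) (hv : 0 ≤ ι v) :
    (∀ w : V, 0 ≤ ι w →
        (1 / 2) * ‖ι v‖ ^ 2 + L (w - v) ≤ (1 / 2) * ‖ι w‖ ^ 2) ↔
      (BddAbove {r : ℝ | ∃ z : V, 0 ≤ ι z ∧ ‖ι z‖ ≤ 1 ∧ r = L z} ∧
        (1 / 2) * ‖ι v‖ ^ 2 +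
          (1 / 2) * (sSup {r : ℝ | ∃ z : V, 0 ≤ ι z ∧ ‖ι z‖ ≤ 1 ∧ r = L z}) ^ 2
          = L v) := by
  classical
  -- smul positivity in Lp
  have hsm : ∀ (t : ℝ) (z : V), 0 ≤ t → 0 ≤ ι z → 0 ≤ ι (t • z) := by
    intro t z ht hz
    rw [_root_.map_smul]
    rw [← MeasureTheory.Lp.coeFn_nonneg] at hz ⊢
    filter_upwards [hz, MeasureTheory.Lp.coeFn_smul t (ι z)] with x hx h2
    rw [h2, Pi.smul_apply, smul_eq_mul]
    exact mul_nonneg ht hx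
  set S : Set ℝ := {r : ℝ | ∃ z : V, 0 ≤ ι z ∧ ‖ι z‖ ≤ 1 ∧ r = L z} with hS
  have h0S : (0 : ℝ) ∈ S := ⟨0, by simp, by simp, by simp⟩
  have hSne : S.Nonempty := ⟨0, h0S⟩
  set c : ℝ := ‖ι v‖ with hc
  have hc0 : 0 ≤ c := norm_nonneg _
  constructor
  · intro h
    have key : ∀ w : V, 0 ≤ ι w → L w ≤ (1/2) * ‖ι w‖^2 - (1/2) * c^2 + L v := by
      intro w hw
      have h1 := h w hw
      rw [map_sub] at h1
      linarith
    have hLv2 : (1/2) * c^2 ≤ L v := by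
      have h1 := key 0 (by simp)
      simp only [map_zero, norm_zero] at h1
      nlinarith
    have hLv : L v = c^2 := by
      rcases eq_or_lt_of_le hc0 with hc' | hc'
      · have h2 := key ((2:ℝ) • v) (hsm 2 v (by norm_num) hv)
        rw [_root_.map_smul, _root_.map_smul, norm_smul] at h2
        simp only [smul_eq_mul, Real.norm_ofNat] at h2
        nlinarith
      · set t : ℝ := L v / c^2 with ht
        have htpos : 0 < t := div_pos (by nlinarith) (by positivity)
        have htc : t * c^2 = L v := by rw [ht]; exact div_mul_cancel₀ _ (pow_pos hc' 2).ne'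
        have hk := key (t • v) (hsm t v htpos.le hv)
        rw [_root_.map_smul, _root_.map_smul, norm_smul] at hk
        simp only [smul_eq_mul, Real.norm_eq_abs, abs_of_pos htpos] at hk
        have h1 : (t - 1)^2 * c^2 ≤ 0 := by nlinarith
        have h2 : (t - 1)^2 * c^2 = 0 := le_antisymm h1 (by positivity)
        have h3 : (t - 1)^2 = 0 := by
          rcases mul_eq_zero.mp h2 with h | h
          · exact h
          · nlinarith
        have ht1 : t = 1 := by nlinarith [sq_nonneg (t-1)]
        nlinarith
    have key2 : ∀ w : V, 0 ≤ ι w → L w ≤ (1/2) * ‖ι w‖^2 + (1/2) * c^2 := by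
      intro w hw
      have := key w hw
      nlinarith
    have claim : ∀ z : V, 0 ≤ ι z → L z ≤ c * ‖ι z‖ := by
      intro z hz
      by_cases hn : ‖ι z‖ = 0
      · rw [hn, mul_zero]
        by_contra h'
        push_neg at h'
        set t : ℝ := (c^2 + 1) / L z with htdef
        have htpos : 0 < t := div_pos (by positivity) h'
        have htL : t * L z = c^2 + 1 := by rw [htdef]; exact div_mul_cancel₀ _ (ne_of_gt h')
        have hk := key2 (t • z) (hsm t z htpos.le hz)
        rw [_root_.map_smul, _root_.map_smul, norm_smul, hn] at hk
        simp only [smul_eq_mul, mul_zero] at hk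
        nlinarith
      · have hnpos : 0 < ‖ι z‖ := lt_of_le_of_ne (norm_nonneg _) (Ne.symm hn)
        rcases eq_or_lt_of_le hc0 with hc' | hc'
        · rw [← hc', zero_mul]
          by_contra h'
          push_neg at h'
          set t : ℝ := L z / ‖ι z‖^2 with htdef
          have htpos : 0 < t := div_pos h' (by positivity)
          have htL : t * ‖ι z‖^2 = L z := by rw [htdef]; exact div_mul_cancel₀ _ (pow_pos hnpos 2).ne'
          have hk := key2 (t • z) (hsm t z htpos.le hz)
          rw [_root_.map_smul, _root_.map_smul, norm_smul] at hk
          simp only [smul_eq_mul, Real.norm_eq_abs, abs_of_pos htpos] at hk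
          nlinarith
        · set t : ℝ := c / ‖ι z‖ with htdef
          have htpos : 0 < t := div_pos hc' hnpos
          have htn : t * ‖ι z‖ = c := by rw [htdef]; exact div_mul_cancel₀ _ hn
          have hk := key2 (t • z) (hsm t z htpos.le hz)
          rw [_root_.map_smul, _root_.map_smul, norm_smul] at hk
          simp only [smul_eq_mul, Real.norm_eq_abs, abs_of_pos htpos] at hk
          nlinarith
    have hub : ∀ r ∈ S, r ≤ c := by
      rintro r ⟨z, hz0, hz1, rfl⟩
      calc L z ≤ c * ‖ι z‖ := claim z hz0
        _ ≤ c * 1 := mul_le_mul_of_nonneg_left hz1 hc0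
        _ = c := mul_one c
    have hbdd : BddAbove S := ⟨c, hub⟩
    have hsup : sSup S = c := by
      rcases eq_or_lt_of_le hc0 with hc' | hc'
      · rw [← hc']
        exact le_antisymm (csSup_le hSne (by rw [← hc'] at hub; exact hub)) (le_csSup hbdd h0S)
      · apply le_antisymm (csSup_le hSne hub)
        apply le_csSup hbdd
        refine ⟨c⁻¹ • v, hsm c⁻¹ v (by positivity) hv, ?_, ?_⟩
        · rw [_root_.map_smul, norm_smul, Real.norm_eq_abs, abs_of_pos (by positivity : (0:ℝ) < c⁻¹)]
          rw [← hc, inv_mul_cancel₀ (ne_of_gt hc')]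
        · rw [_root_.map_smul, smul_eq_mul, hLv]
          field_simp
    exact ⟨hbdd, by rw [hsup, hLv]; ring⟩
  · rintro ⟨hbdd, heq⟩
    set M : ℝ := sSup S with hM
    have hM0 : 0 ≤ M := le_csSup hbdd h0S
    have claim2 : ∀ z : V, 0 ≤ ι z → L z ≤ M * ‖ι z‖ := by
      intro z hz
      by_cases hn : ‖ι z‖ = 0
      · rw [hn, mul_zero]
        by_contra h'
        push_neg at h'
        set t : ℝ := (M + 1) / L z with htdef
        have htpos : 0 < t := div_pos (by linarith) h'
        have hmem : t * L z ∈ S := by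
          refine ⟨t • z, hsm t z htpos.le hz, ?_, ?_⟩
          · rw [_root_.map_smul, norm_smul, hn, mul_zero]; norm_num
          · rw [_root_.map_smul, smul_eq_mul]
        have := le_csSup hbdd hmem
        have htL : t * L z = M + 1 := by rw [htdef]; exact div_mul_cancel₀ _ (ne_of_gt h')
        linarith
      · have hnpos : 0 < ‖ι z‖ := lt_of_le_of_ne (norm_nonneg _) (Ne.symm hn)
        have hmem : ‖ι z‖⁻¹ * L z ∈ S := by
          refine ⟨‖ι z‖⁻¹ • z, hsm _ z (by positivity) hz, ?_, ?_⟩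
          · rw [_root_.map_smul, norm_smul, Real.norm_eq_abs, abs_of_pos (by positivity : (0:ℝ) < ‖ι z‖⁻¹)]
            rw [inv_mul_cancel₀ hn]
          · rw [_root_.map_smul, smul_eq_mul]
        have h2 : ‖ι z‖⁻¹ * L z ≤ M := le_csSup hbdd hmem
        calc L z = ‖ι z‖ * (‖ι z‖⁻¹ * L z) := by field_simp
          _ ≤ ‖ι z‖ * M := mul_le_mul_of_nonneg_left h2 (norm_nonneg _)
          _ = M * ‖ι z‖ := mul_comm _ _
    intro w hw
    rw [map_sub]
    have h1 := claim2 w hw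
    nlinarith [sq_nonneg (M - ‖ι w‖)]

/-- Characterization of the unilateral gradient flow by a differential inclusion: for
`F(u) = ½a(u,u) − ⟨f,u⟩` (at a fixed time), `u ∈ H¹₀` and `v = u̇ ∈ H¹₀` with `v ≥ 0`, the
following are equivalent:
(i) `Au + f ∈ ∂Φ(v)` where `Φ(w) = ½‖w‖²_{L²} + I_{{w ≥ 0}}` and
`(Au + f, z) = −a(u,z) + ⟨f, ι z⟩`, i.e. `Φ(w) ≥ Φ(v) + (Au+f, w−v)` for all `w ∈ H¹₀`;
(ii) `½|v|²_{L²₊} + ½|∂F|²_{L²₊}(u) = −dF(u)[v]`, with the unilateral slope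
`|∂F|_{L²₊}(u) = sup { −dF(u)[z] : z ∈ H¹₀, ι z ≥ 0, ‖ι z‖_{L²} ≤ 1 }` finite.
`H¹₀` is modelled by a normed space `V` embedded in `L²` by `ι`. -/
theorem inclusion_iff_power_identity
    {α : Type*} [MeasurableSpace α] (μ : Measure α)
    {V : Type*} [NormedAddCommGroup V] [NormedSpace ℝ V]
    (ι : V →L[ℝ] Lp ℝ 2 μ)
    (a : V →L[ℝ] V →L[ℝ] ℝ) (hsymm : ∀ u v : V, a u v = a v u)
    (f : Lp ℝ 2 μ) (u v : V) (hv : 0 ≤ ι v) :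
    (∀ w : V, 0 ≤ ι w →
        (1 / 2) * ‖ι v‖ ^ 2 + (-(a u (w - v)) + (inner ℝ f (ι (w - v)) : ℝ)) ≤
          (1 / 2) * ‖ι w‖ ^ 2) ↔
      (BddAbove {r : ℝ | ∃ z : V, 0 ≤ ι z ∧ ‖ι z‖ ≤ 1 ∧
          r = -(a u z) + (inner ℝ f (ι z) : ℝ)} ∧
        (1 / 2) * ‖ι v‖ ^ 2 +
            (1 / 2) * (sSup {r : ℝ | ∃ z : V, 0 ≤ ι z ∧ ‖ι z‖ ≤ 1 ∧
              r = -(a u z) + (inner ℝ f (ι z) : ℝ)}) ^ 2 =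
          -(a u v) + (inner ℝ f (ι v) : ℝ)) := by
  exact my_aux ι
    { toFun := fun z => -(a u z) + (inner ℝ f (ι z) : ℝ)
      map_add' := by
        intro x y
        simp only [map_add, ContinuousLinearMap.add_apply, inner_add_right]
        ring
      map_smul' := by
        intro t x
        simp only [_root_.map_smul, ContinuousLinearMap.coe_smul', Pi.smul_apply,
          real_inner_smul_right, smul_eq_mul, RingHom.id_apply]
        ring } v hv
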